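/- Let P be an LPOD and let M be a three-valued answer set of P. Then collapse(M), the set of literals L with M(L)=T, is a Brewka answer set of P (an answer set in the sense of the original two-valued LPOD semantics). -/

import Mathlib

/-! Four truth values F < F* < T* < T. -/
inductive V4 : Type
  | F | Fs | Ts | T
  deriving DecidableEq, Repr

instance : Fintype V4 where
  elems := {V4.F, V4.Fs, V4.Ts, V4.T}
  complete x := by cases x <;> simp

namespace V4

def toNat : V4 → ℕ
  | F => 0
  | Fs => 1
  | Ts => 2
  | T => 3

theorem toNat_injective : Function.Injective toNat := by
  intro a b h
  cases a <;> cases b <;> simp_all [toNat]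

instance : LinearOrder V4 := LinearOrder.lift' toNat toNat_injective

instance : BoundedOrder V4 where
  top := T
  le_top a := by cases a <;> decide
  bot := F
  bot_le a := by cases a <;> decide

/-- Negation-as-failure: `not φ` is `T` if `φ ≤ F*`, else `F`. -/
def notv (a : V4) : V4 := if a ≤ Fs then T else F

/-- Ordered disjunction on truth values: `u × v = v` if `u = F*`, else `u`. -/
def times (a b : V4) : V4 := if a = Fs then b else a

end V4

variable {α : Type}

/-- A ground literal: an atom together with a polarity (`true` = the atom itself,
`false` = its strong negation). -/
structure Lit (α : Type) where
  atom : α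
  positive : Bool
  deriving DecidableEq

/-- A (four-valued) interpretation assigns a truth value to every literal.
Three-valued interpretations are the `solid` ones (no `T*` value). -/
abbrev Interp (α : Type) := Lit α → V4

/-- `I` is solid (equivalently, three-valued) if it assigns `T*` to no literal. -/
def solid (I : Interp α) : Prop := ∀ l, I l ≠ V4.Ts

/-- `I` is consistent: no atom has both the atom and its strong negation `T`. -/
def consistentI (I : Interp α) : Prop :=
  ∀ a : α, ¬ (I ⟨a, true⟩ = V4.T ∧ I ⟨a, false⟩ = V4.T)

/-- `I` takes values only in `{F, T}`. -/
def twoValued (I : Interp α) : Prop := ∀ l, I l = V4.F ∨ I l = V4.T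

/-- Value of the conjunction of a list of literals. -/
def evalConj (I : Interp α) (L : List (Lit α)) : V4 := (L.map I).foldr min V4.T

/-- Value of the conjunction `not B1 ∧ ⋯ ∧ not Bk`. -/
def evalNegs (I : Interp α) (L : List (Lit α)) : V4 :=
  (L.map (fun b => V4.notv (I b))).foldr min V4.T

/-- Value of the disjunction of a list of literals. -/
def evalDisj (I : Interp α) (L : List (Lit α)) : V4 := (L.map I).foldr max V4.F

/-- Value of an ordered disjunction of the given (nonempty) list of values.
(`F*` is a right identity for `×`, so the fold computes `v1 × ⋯ × vn`.) -/
def evalOD (vs : List V4) : V4 := vs.foldr V4.times V4.Fs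

/-- Pointwise `≤` on interpretations. -/
def interpLE (I J : Interp α) : Prop := ∀ l, I l ≤ J l

/-- The four-valued relation `⪯`: `u ⪯ v` iff `u = v` or `u ≺ v`, where
`F ≺ F*`, `F ≺ T*`, `F ≺ T` and `T* ≺ T`.  On three-valued (solid)
interpretations it restricts to the ordering generated by `F ≺ F*`, `F ≺ T`. -/
def preceq (u v : V4) : Prop :=
  u = v ∨ (u = V4.F ∧ v ≠ V4.F) ∨ (u = V4.Ts ∧ v = V4.T)

/-- Pointwise `⪯` on interpretations. -/
def interpPreceq (I J : Interp α) : Prop := ∀ l, preceq (I l) (J l)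

/-- The set of literals that are `T` in `I`. -/
def collapse (I : Interp α) : Set (Lit α) := { l | I l = V4.T }

/-! ### LPOD rules -/

/-- An LPOD rule `C1 × ⋯ × Cn ← A1,…,Am, not B1,…,not Bk` with head
`c1 :: cs` (so the head is nonempty). -/
structure Rule (α : Type) where
  c1 : Lit α
  cs : List (Lit α)
  pos : List (Lit α)
  neg : List (Lit α)

def Rule.headList (R : Rule α) : List (Lit α) := R.c1 :: R.cs

def Rule.headVal (R : Rule α) (I : Interp α) : V4 := evalOD (R.headList.map I)

def Rule.bodyVal (R : Rule α) (I : Interp α) : V4 :=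
  min (evalConj I R.pos) (evalNegs I R.neg)

/-- `I` satisfies the rule `R` (the rule evaluates to `T`). -/
def ruleSat (I : Interp α) (R : Rule α) : Prop := R.bodyVal I ≤ R.headVal I

/-- `I` is a model of the LPOD `P`. -/
def isModel (I : Interp α) (P : Set (Rule α)) : Prop := ∀ R ∈ P, ruleSat I R

/-! ### The ×-reduct of an LPOD -/

/-- A reduct rule `C ← [F*,] A1,…,Am`; `fstar` records whether the constant `F*`
occurs in the body. -/
structure RedRule (α : Type) where
  head : Lit α
  pos : List (Lit α)
  fstar : Bool

def RedRule.bodyVal (r : RedRule α) (I : Interp α) : V4 :=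
  min (if r.fstar then V4.Fs else V4.T) (evalConj I r.pos)

def redSat (I : Interp α) (r : RedRule α) : Prop := r.bodyVal I ≤ I r.head

def redModel (I : Interp α) (Q : Set (RedRule α)) : Prop := ∀ r ∈ Q, redSat I r

/-- Reduct rules generated by a head `C1,…,Cn`: rules `Cj ← F*, body` for
`j < r` and `Cr ← body`, where `r` is the least index with
`I C1 = ⋯ = I C_{r-1} = F*` and (`r = n` or `I Cr ≠ F*`). -/
def xredHead (I : Interp α) (body : List (Lit α)) : List (Lit α) → List (RedRule α)
  | [] => []
  | [c] => [⟨c, body, false⟩]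
  | c :: c' :: rest =>
    if I c = V4.Fs then ⟨c, body, true⟩ :: xredHead I body (c' :: rest)
    else [⟨c, body, false⟩]

/-- The ×-reduct of a rule w.r.t. `I`. -/
def xredRule (I : Interp α) (R : Rule α) : List (RedRule α) :=
  if ∃ b ∈ R.neg, I b = V4.T then [] else xredHead I R.pos R.headList

/-- The ×-reduct of an LPOD w.r.t. `I`. -/
def xreduct (I : Interp α) (P : Set (Rule α)) : Set (RedRule α) :=
  { r | ∃ R ∈ P, r ∈ xredRule I R }

/-- `M` is a three-valued answer set of the LPOD `P`: a consistent three-valued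
interpretation that is the `≤`-least (three-valued) model of `P^M_×`. -/
def threeAnswerSet (P : Set (Rule α)) (M : Interp α) : Prop :=
  solid M ∧ consistentI M ∧ redModel M (xreduct M P) ∧
  ∀ N : Interp α, solid N → redModel N (xreduct M P) → interpLE M N

/-! ### Two-valued notions: Brewka answer sets and GL answer sets -/

/-- A set of literals is consistent if it contains no complementary pair. -/
def twoConsistent (N : Set (Lit α)) : Prop :=
  ∀ a : α, ¬ (Lit.mk a true ∈ N ∧ Lit.mk a false ∈ N)

/-- `N` is a (two-valued) Brewka-model of the LPOD `P`. -/
def brewkaModel (N : Set (Lit α)) (P : Set (Rule α)) : Prop :=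
  ∀ R ∈ P, (∀ a ∈ R.pos, a ∈ N) → (∀ b ∈ R.neg, b ∉ N) → ∃ c ∈ R.headList, c ∈ N

/-- A positive rule `C ← A1,…,Am`. -/
structure PosRule (α : Type) where
  head : Lit α
  pos : List (Lit α)

/-- `N` is a two-valued model of a positive program. -/
def posModel (N : Set (Lit α)) (Q : Set (PosRule α)) : Prop :=
  ∀ r ∈ Q, (∀ a ∈ r.pos, a ∈ N) → r.head ∈ N

/-- The Brewka ×-reduct of an LPOD w.r.t. a set of literals `N`:
`Ci ← A1,…,Am` whenever `Ci ∈ N` and `N ∩ {C1,…,C_{i-1},B1,…,Bk} = ∅`. -/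
def brewkaReduct (N : Set (Lit α)) (P : Set (Rule α)) : Set (PosRule α) :=
  { r | ∃ R ∈ P, ∃ l1 l2 : List (Lit α),
      R.headList = l1 ++ r.head :: l2 ∧ r.pos = R.pos ∧ r.head ∈ N ∧
      (∀ c ∈ l1, c ∉ N) ∧ (∀ b ∈ R.neg, b ∉ N) }

/-- `N` is a Brewka answer set of the LPOD `P`. -/
def brewkaAnswerSet (P : Set (Rule α)) (N : Set (Lit α)) : Prop :=
  twoConsistent N ∧ brewkaModel N P ∧ posModel N (brewkaReduct N P) ∧
  ∀ N', posModel N' (brewkaReduct N P) → N ⊆ N'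

/-- The Gelfond–Lifschitz reduct of an extended logic program (an LPOD all
of whose rule heads are single literals) w.r.t. a set of literals `N`. -/
def glReduct (P : Set (Rule α)) (N : Set (Lit α)) : Set (PosRule α) :=
  { r | ∃ R ∈ P, (∀ b ∈ R.neg, b ∉ N) ∧ r.head = R.c1 ∧ r.pos = R.pos }

/-- `N` is a standard answer set of the extended logic program `P`: a consistent
set of literals that is the least model of `P^N`. -/
def stdAnswerSet (P : Set (Rule α)) (N : Set (Lit α)) : Prop :=
  twoConsistent N ∧ posModel N (glReduct P N) ∧
  ∀ N', posModel N' (glReduct P N) → N ⊆ N'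

/-! ### DLPODs -/

/-- A DLPOD rule `𝒞1 × ⋯ × 𝒞n ← A1,…,Am, not B1,…,not Bk`, where each `𝒞i`
is a disjunction of literals; the head is `c1 :: cs` (nonempty). -/
structure DRule (α : Type) where
  c1 : List (Lit α)
  cs : List (List (Lit α))
  pos : List (Lit α)
  neg : List (Lit α)

def DRule.headList (R : DRule α) : List (List (Lit α)) := R.c1 :: R.cs

def DRule.headVal (R : DRule α) (I : Interp α) : V4 :=
  evalOD (R.headList.map (evalDisj I))

def DRule.bodyVal (R : DRule α) (I : Interp α) : V4 :=
  min (evalConj I R.pos) (evalNegs I R.neg)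

def dRuleSat (I : Interp α) (R : DRule α) : Prop := R.bodyVal I ≤ R.headVal I

def isDModel (I : Interp α) (P : Set (DRule α)) : Prop := ∀ R ∈ P, dRuleSat I R

/-- A disjunctive reduct rule `𝒞 ← [F*,] A1,…,Am`. -/
structure DRedRule (α : Type) where
  head : List (Lit α)
  pos : List (Lit α)
  fstar : Bool

def DRedRule.bodyVal (r : DRedRule α) (I : Interp α) : V4 :=
  min (if r.fstar then V4.Fs else V4.T) (evalConj I r.pos)

def dredSat (I : Interp α) (r : DRedRule α) : Prop := r.bodyVal I ≤ evalDisj I r.head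

def dredModel (I : Interp α) (Q : Set (DRedRule α)) : Prop := ∀ r ∈ Q, dredSat I r

def dxredHead (I : Interp α) (body : List (Lit α)) :
    List (List (Lit α)) → List (DRedRule α)
  | [] => []
  | [c] => [⟨c, body, false⟩]
  | c :: c' :: rest =>
    if evalDisj I c = V4.Fs then ⟨c, body, true⟩ :: dxredHead I body (c' :: rest)
    else [⟨c, body, false⟩]

/-- The ×-reduct of a DLPOD rule w.r.t. `I`. -/
def dxredRule (I : Interp α) (R : DRule α) : List (DRedRule α) :=
  if ∃ b ∈ R.neg, I b = V4.T then [] else dxredHead I R.pos R.headList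

/-- The ×-reduct of a DLPOD w.r.t. `I`. -/
def dxreduct (I : Interp α) (P : Set (DRule α)) : Set (DRedRule α) :=
  { r | ∃ R ∈ P, r ∈ dxredRule I R }

/-- `M` is an answer set of the DLPOD `P`: a consistent three-valued
interpretation that is a `≤`-minimal (three-valued) model of `P^M_×`. -/
def dAnswerSet (P : Set (DRule α)) (M : Interp α) : Prop :=
  solid M ∧ consistentI M ∧ dredModel M (dxreduct M P) ∧
  ∀ N : Interp α, solid N → dredModel N (dxreduct M P) → interpLE N M → N = M

/-- A positive disjunctive rule `C1 ∨ ⋯ ∨ Cq ← A1,…,Am`. -/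
structure DPosRule (α : Type) where
  head : List (Lit α)
  pos : List (Lit α)

/-- `N` is a two-valued model of a positive disjunctive program. -/
def dposModel (N : Set (Lit α)) (Q : Set (DPosRule α)) : Prop :=
  ∀ r ∈ Q, (∀ a ∈ r.pos, a ∈ N) → ∃ c ∈ r.head, c ∈ N

/-- The Gelfond–Lifschitz reduct of a disjunctive extended logic program (a
DLPOD all of whose rule heads are single disjunctions). -/
def glDReduct (P : Set (DRule α)) (N : Set (Lit α)) : Set (DPosRule α) :=
  { r | ∃ R ∈ P, (∀ b ∈ R.neg, b ∉ N) ∧ r.head = R.c1 ∧ r.pos = R.pos }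

/-- `N` is a standard disjunctive answer set: a consistent set of literals that
is a minimal two-valued model of `P^N`. -/
def stdDAnswerSet (P : Set (DRule α)) (N : Set (Lit α)) : Prop :=
  twoConsistent N ∧ dposModel N (glDReduct P N) ∧
  ∀ N', dposModel N' (glDReduct P N) → N' ⊆ N → N' = N

section AuxProof

variable {α : Type}

lemma V4.F_le' (a : V4) : V4.F ≤ a := by cases a <;> decide

lemma V4.le_T' (a : V4) : a ≤ V4.T := by cases a <;> decide

lemma V4.T_le_iff {a : V4} : V4.T ≤ a ↔ a = V4.T := by cases a <;> decide

lemma V4.Fs_le_iff {a : V4} : V4.Fs ≤ a ↔ a ≠ V4.F := by cases a <;> decide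

lemma evalConj_nil (I : Interp α) : evalConj I [] = V4.T := rfl

lemma evalConj_cons (I : Interp α) (a : Lit α) (L : List (Lit α)) :
    evalConj I (a :: L) = min (I a) (evalConj I L) := rfl

lemma evalConj_le_of_mem (I : Interp α) {L : List (Lit α)} {a : Lit α} (h : a ∈ L) :
    evalConj I L ≤ I a := by
  induction L with
  | nil => cases h
  | cons b L ih =>
    rw [evalConj_cons]
    rcases List.mem_cons.1 h with rfl | h
    · exact min_le_left _ _
    · exact le_trans (min_le_right _ _) (ih h)

lemma le_evalConj (I : Interp α) {L : List (Lit α)} {v : V4} (h : ∀ a ∈ L, v ≤ I a) :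
    v ≤ evalConj I L := by
  induction L with
  | nil => exact V4.le_T' v
  | cons b L ih =>
    rw [evalConj_cons]
    exact le_min (h b (by simp)) (ih fun a ha => h a (by simp [ha]))

lemma evalConj_eq_T (I : Interp α) {L : List (Lit α)} :
    evalConj I L = V4.T ↔ ∀ a ∈ L, I a = V4.T := by
  constructor
  · intro h a ha
    have h2 := evalConj_le_of_mem I ha
    rw [h] at h2
    exact V4.T_le_iff.1 h2
  · intro h
    exact le_antisymm (V4.le_T' _) (le_evalConj I fun a ha => by rw [h a ha])

lemma evalConj_mem (I : Interp α) (L : List (Lit α)) :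
    evalConj I L = V4.T ∨ ∃ a ∈ L, evalConj I L = I a := by
  induction L with
  | nil => left; rfl
  | cons b L ih =>
    rw [evalConj_cons]
    rcases min_choice (I b) (evalConj I L) with h | h
    · right; exact ⟨b, by simp, h⟩
    · rcases ih with h' | ⟨a, ha, h'⟩
      · left; rw [h, h']
      · right; exact ⟨a, by simp [ha], by rw [h]; exact h'⟩

lemma redSat_final_iff (I : Interp α) (c : Lit α) (body : List (Lit α)) :
    redSat I ⟨c, body, false⟩ ↔ evalConj I body ≤ I c := by
  unfold redSat RedRule.bodyVal
  simp [min_eq_right (V4.le_T' _)]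

/-- If all reduct rules from a head are satisfied by `I` and the body is `T`,
some head literal is `T`. -/
lemma headT {I : Interp α} {body : List (Lit α)} (hbody : evalConj I body = V4.T) :
    ∀ hs : List (Lit α), hs ≠ [] →
      (∀ r ∈ xredHead I body hs, redSat I r) → ∃ c ∈ hs, I c = V4.T := by
  intro hs
  induction hs with
  | nil => intro h; exact absurd rfl h
  | cons c rest ih =>
    intro _ hsat
    cases rest with
    | nil =>
      have h1 : redSat I ⟨c, body, false⟩ := hsat _ (by simp [xredHead])
      rw [redSat_final_iff, hbody] at h1
      exact ⟨c, by simp, V4.T_le_iff.1 h1⟩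
    | cons c' rest' =>
      by_cases hc : I c = V4.Fs
      · obtain ⟨d, hd, hdT⟩ := ih (by simp)
          (fun r hr => hsat r (by simp [xredHead, hc]; right; exact hr))
        exact ⟨d, by simp [hd], hdT⟩
      · have h1 : redSat I ⟨c, body, false⟩ := hsat _ (by simp [xredHead, hc])
        rw [redSat_final_iff, hbody] at h1
        exact ⟨c, by simp, V4.T_le_iff.1 h1⟩

/-- Reduct rules of a suffix are reduct rules of the whole head, provided the
prefix consists of `F*`-valued literals. -/
lemma xredHead_suffix (I : Interp α) (body : List (Lit α)) :
    ∀ pre hs : List (Lit α), hs ≠ [] → (∀ c ∈ pre, I c = V4.Fs) →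
      ∀ r ∈ xredHead I body hs, r ∈ xredHead I body (pre ++ hs) := by
  intro pre
  induction pre with
  | nil => intro hs _ _ r hr; simpa using hr
  | cons p pre' ih =>
    intro hs hne hpre r hr
    have h1 : pre' ++ hs ≠ [] := by
      intro h; rcases List.append_eq_nil_iff.1 h with ⟨-, h2⟩; exact hne h2
    cases h2 : pre' ++ hs with
    | nil => exact absurd h2 h1
    | cons q qs =>
      have hp : I p = V4.Fs := hpre p (by simp)
      have : xredHead I body ((p :: pre') ++ hs) =
          ⟨p, body, true⟩ :: xredHead I body (pre' ++ hs) := by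
        rw [List.cons_append, h2]
        simp [xredHead, hp]
      rw [this]
      exact List.mem_cons_of_mem _ (ih hs hne (fun c hc => hpre c (by simp [hc])) r hr)

open Classical in
/-- The key lemma: the demoted interpretation `J` satisfies all reduct rules
arising from any suffix of a rule head whose consumed prefix is `F*`. -/
lemma key_lemma (P : Set (Rule α)) (M : Interp α) (N' : Set (Lit α))
    (hsol : solid M)
    (hmod : redModel M (xreduct M P))
    (hN' : posModel N' (brewkaReduct (collapse M) P))
    (R : Rule α) (hR : R ∈ P) (hneg : ∀ b ∈ R.neg, M b ≠ V4.T)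
    (J : Interp α)
    (hJ : ∀ l, J l = if M l = V4.T ∧ l ∉ N' then V4.Fs else M l) :
    ∀ hs pre : List (Lit α), R.headList = pre ++ hs → (∀ c ∈ pre, M c = V4.Fs) →
      ∀ r ∈ xredHead M R.pos hs, redSat J r := by
  have hnn : ¬ ∃ b ∈ R.neg, M b = V4.T := by
    rintro ⟨b, hb, hbT⟩; exact hneg b hb hbT
  have hJF : ∀ l, J l = V4.F ↔ M l = V4.F := by
    intro l; rw [hJ l]
    by_cases h : M l = V4.T ∧ l ∉ N' <;> simp [h]
  have hJT : ∀ l, J l = V4.T → M l = V4.T ∧ l ∈ N' := by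
    intro l hl; rw [hJ l] at hl
    by_cases h : M l = V4.T ∧ l ∉ N'
    · rw [if_pos h] at hl; cases hl
    · rw [if_neg h] at hl
      refine ⟨hl, ?_⟩
      by_contra hnot
      exact h ⟨hl, hnot⟩
  have hJsolid : ∀ l, J l ≠ V4.Ts := by
    intro l; rw [hJ l]
    by_cases h : M l = V4.T ∧ l ∉ N'
    · rw [if_pos h]; intro h2; cases h2
    · rw [if_neg h]; exact hsol l
  -- the main claim for the final (fstar = false) rule
  have final : ∀ (c : Lit α) (pre rest : List (Lit α)),
      R.headList = pre ++ c :: rest → (∀ d ∈ pre, M d = V4.Fs) →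
      (rest = [] ∨ M c ≠ V4.Fs) →
      redSat J ⟨c, R.pos, false⟩ := by
    intro c pre rest hsplit hpre hcase
    have hmem : (⟨c, R.pos, false⟩ : RedRule α) ∈ xreduct M P := by
      refine ⟨R, hR, ?_⟩
      rw [xredRule, if_neg hnn, hsplit]
      refine xredHead_suffix M R.pos pre (c :: rest) (by simp) hpre _ ?_
      rcases hcase with rfl | hc
      · simp [xredHead]
      · cases rest with
        | nil => simp [xredHead]
        | cons c' rest' => rw [xredHead, if_neg hc]; simp
    have hMsat : redSat M ⟨c, R.pos, false⟩ := hmod _ hmem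
    rw [redSat_final_iff] at hMsat ⊢
    by_cases hT : evalConj J R.pos = V4.T
    · -- all body literals are T in M and in N'
      have hall := (evalConj_eq_T J).1 hT
      have hposM : ∀ a ∈ R.pos, M a = V4.T := fun a ha => (hJT a (hall a ha)).1
      have hposN' : ∀ a ∈ R.pos, a ∈ N' := fun a ha => (hJT a (hall a ha)).2
      have hMc : M c = V4.T := by
        rw [(evalConj_eq_T M).2 hposM] at hMsat
        exact V4.T_le_iff.1 hMsat
      have hrr : (⟨c, R.pos⟩ : PosRule α) ∈ brewkaReduct (collapse M) P := by
        refine ⟨R, hR, pre, rest, hsplit, rfl, hMc, ?_, ?_⟩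
        · intro d hd hdN
          have h2 : M d = V4.T := hdN
          rw [hpre d hd] at h2
          cases h2
        · intro b hb hbN
          exact hneg b hb hbN
      have hcN' : c ∈ N' := hN' _ hrr hposN'
      have hJc : J c = V4.T := by
        rw [hJ c, if_neg (by simp [hcN'])]
        exact hMc
      rw [hT, hJc]
    · -- body value ≤ F*; show J c is at least F* unless body is F
      have hvFs : evalConj J R.pos ≤ V4.Fs := by
        rcases evalConj_mem J R.pos with h | ⟨a, ha, hva⟩
        · exact absurd h hT
        rw [hva]
        have hJaT : J a ≠ V4.T := fun h => hT (by rw [hva, h])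
        cases h : J a with
        | F => exact V4.F_le' _
        | Fs => exact le_refl _
        | Ts => exact absurd h (hJsolid a)
        | T => exact absurd h hJaT
      by_cases hvF : evalConj J R.pos = V4.F
      · rw [hvF]; exact V4.F_le' _
      -- body value is Fs: every body literal is not F in J, hence not F in M
      have hMpos : ∀ a' ∈ R.pos, V4.Fs ≤ M a' := by
        intro a' ha'
        rw [V4.Fs_le_iff]
        intro hMF
        have h3 : J a' = V4.F := (hJF a').2 hMF
        have h1 := evalConj_le_of_mem J ha'
        rw [h3] at h1
        exact hvF (le_antisymm h1 (V4.F_le' _))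
      have hMc : V4.Fs ≤ M c := le_trans (le_evalConj M hMpos) hMsat
      have hJc : V4.Fs ≤ J c := by
        rw [V4.Fs_le_iff] at hMc ⊢
        intro hJcF
        exact hMc ((hJF c).1 hJcF)
      exact le_trans hvFs hJc
  intro hs
  induction hs with
  | nil => intro pre _ _ r hr; simp [xredHead] at hr
  | cons c rest ih =>
    intro pre hsplit hpre r hr
    cases rest with
    | nil =>
      simp [xredHead] at hr
      subst hr
      exact final c pre [] hsplit hpre (Or.inl rfl)
    | cons c' rest' =>
      by_cases hc : M c = V4.Fs
      · rw [xredHead, if_pos hc] at hr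
        rcases List.mem_cons.1 hr with rfl | hr
        · -- fstar = true rule with M c = Fs, so J c = Fs
          have hJc : J c = V4.Fs := by
            rw [hJ c, if_neg (by rw [hc]; simp)]
            exact hc
          show min (if true then V4.Fs else V4.T) (evalConj J R.pos) ≤ J c
          rw [if_pos rfl, hJc]
          exact min_le_left _ _
        · exact ih (pre ++ [c]) (by rw [hsplit]; simp) (by
            intro d hd
            rcases List.mem_append.1 hd with hd | hd
            · exact hpre d hd
            · simp at hd; subst hd; exact hc) r hr
      · rw [xredHead, if_neg hc] at hr
        simp at hr
        subst hr
        exact final c pre (c' :: rest') hsplit hpre (Or.inr hc)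

end AuxProof

/-- The collapse of a three-valued answer set of an LPOD is a
Brewka answer set. -/
theorem collapse_threeAnswerSet_brewka {α : Type} (P : Set (Rule α)) (M : Interp α)
    (h : threeAnswerSet P M) : brewkaAnswerSet P (collapse M) := by
  classical
  obtain ⟨hsol, hcons, hmod, hleast⟩ := h
  refine ⟨?_, ?_, ?_, ?_⟩
  · -- consistency
    intro a ⟨h1, h2⟩
    exact hcons a ⟨h1, h2⟩
  · -- brewkaModel
    intro R hR hpos hneg
    have hnn : ¬ ∃ b ∈ R.neg, M b = V4.T := by
      rintro ⟨b, hb, hbT⟩; exact hneg b hb hbT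
    have hred : ∀ r ∈ xredHead M R.pos R.headList, redSat M r := by
      intro r hr
      exact hmod r ⟨R, hR, by rw [xredRule, if_neg hnn]; exact hr⟩
    have hbody : evalConj M R.pos = V4.T := (evalConj_eq_T M).2 hpos
    exact headT hbody R.headList (by simp [Rule.headList]) hred
  · -- posModel of the Brewka reduct: head membership is built in
    rintro r ⟨R, _, l1, l2, _, _, hhead, _, _⟩ _
    exact hhead
  · -- minimality
    intro N' hN' l hl
    set J : Interp α := fun l => if M l = V4.T ∧ l ∉ N' then V4.Fs else M l with hJdef
    have hJ : ∀ l, J l = if M l = V4.T ∧ l ∉ N' then V4.Fs else M l := fun l => rfl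
    have hJsolid : solid J := by
      intro l'
      rw [hJ l']
      by_cases h : M l' = V4.T ∧ l' ∉ N'
      · simp [h]
      · rw [if_neg h]; exact hsol l'
    have hJmod : redModel J (xreduct M P) := by
      rintro r ⟨R, hR, hr⟩
      by_cases hb : ∃ b ∈ R.neg, M b = V4.T
      · rw [xredRule, if_pos hb] at hr; cases hr
      · rw [xredRule, if_neg hb] at hr
        exact key_lemma P M N' hsol hmod hN' R hR
          (fun b hb' hbT => hb ⟨b, hb', hbT⟩) J hJ R.headList [] rfl (by simp) r hr
    have hle := hleast J hJsolid hJmod l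
    have hlT : M l = V4.T := hl
    rw [hlT] at hle
    have hJT : J l = V4.T := le_antisymm (V4.le_T' _) hle
    rw [hJ l] at hJT
    by_cases h : M l = V4.T ∧ l ∉ N'
    · rw [if_pos h] at hJT; cases hJT
    · by_contra hnot
      exact h ⟨hlT, hnot⟩
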